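/- (Lemma 1) Let p₁ and p₂ be two distinct primitive polynomials of degree k over 𝔽₂ and let n ≥ 2k. Then the PR codes C(p₁, n) and C(p₂, n) have no nonzero codeword in common: C(p₁, n) ∩ C(p₂, n) = {(0,…,0)}. -/

import Mathlib

/-- A polynomial `p` over 𝔽₂ is primitive of degree `k` if it is irreducible of degree `k`
and the residue class of `X` in `𝔽₂[x]/(p)` has multiplicative order `2^k - 1`. -/
def IsPrimitivePoly (k : ℕ) (p : Polynomial (ZMod 2)) : Prop :=
  p.natDegree = k ∧ Irreducible p ∧ orderOf (AdjoinRoot.root p) = 2 ^ k - 1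

/-- The PR code `C(p, n)`: vectors `v ∈ 𝔽₂ⁿ` with `∑_{i=0}^{k} p_i v_{m-i} = 0`
for all `k ≤ m ≤ n - 1`. -/
def PRCode (k n : ℕ) (p : Polynomial (ZMod 2)) : Set (Fin n → ZMod 2) :=
  {v | ∀ m : Fin n, k ≤ (m : ℕ) →
    ∑ i ∈ Finset.range (k + 1),
      p.coeff i * v ⟨(m : ℕ) - i, lt_of_le_of_lt (Nat.sub_le _ _) m.isLt⟩ = 0}

open Polynomial Finset

private lemma zmod2_eq_one {a : ZMod 2} (h : a ≠ 0) : a = 1 := by revert h; revert a; decide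
private lemma zmod2_eq_zero {a : ZMod 2} (h : a ≠ 1) : a = 0 := by revert h; revert a; decide
private lemma char2_cancel {a b : ZMod 2} (h : a + b = 0) : b = a := by revert h; revert a b; decide
private lemma char2_self (a : ZMod 2) : a + a = 0 := by revert a; decide

noncomputable def shiftT : Module.End (ZMod 2) (ℕ → ZMod 2) where
  toFun u := fun m => u (m - 1)
  map_add' _ _ := rfl
  map_smul' _ _ := rfl

lemma shiftT_pow (j : ℕ) (u : ℕ → ZMod 2) (m : ℕ) : ((shiftT ^ j) u) m = u (m - j) := by
  induction j generalizing u m with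
  | zero => simp
  | succ j ih =>
    rw [pow_succ, Module.End.mul_apply, ih]
    show u (m - j - 1) = _
    rw [Nat.sub_sub]

lemma aeval_shiftT_apply (f : Polynomial (ZMod 2)) (u : ℕ → ZMod 2) (m : ℕ) :
    (Polynomial.aeval shiftT f) u m
      = ∑ j ∈ Finset.range (f.natDegree + 1), f.coeff j * u (m - j) := by
  have key : (Polynomial.aeval shiftT f) u m = f.sum fun j a => a * u (m - j) := by
    induction f using Polynomial.induction_on' with
    | add p q hp hq =>
      rw [map_add, LinearMap.add_apply, Pi.add_apply, hp, hq,
        Polynomial.sum_add_index _ _ _ (fun i => by simp) (fun i a b => by ring)]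
    | monomial i a =>
      rw [Polynomial.aeval_monomial, Polynomial.sum_monomial_index _ _ (by simp),
        Module.End.mul_apply, Module.algebraMap_end_apply, Pi.smul_apply, shiftT_pow,
        smul_eq_mul]
  rw [key, Polynomial.sum_over_range f (by simp)]

noncomputable def extSeq (k : ℕ) (c : ℕ → ZMod 2) (v : ℕ → ZMod 2) (m : ℕ) : ZMod 2 :=
  if m < k then v m
  else ∑ i ∈ (Finset.range k).attach, c (i.1 + 1) * extSeq k c v (m - (i.1 + 1))
  termination_by m
  decreasing_by
    have hik : i.1 < k := Finset.mem_range.mp i.2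
    omega

lemma extSeq_lt {k : ℕ} {c v : ℕ → ZMod 2} {m : ℕ} (h : m < k) : extSeq k c v m = v m := by
  rw [extSeq, if_pos h]

lemma extSeq_ge {k : ℕ} {c v : ℕ → ZMod 2} {m : ℕ} (h : ¬ m < k) :
    extSeq k c v m = ∑ i ∈ Finset.range k, c (i + 1) * extSeq k c v (m - (i + 1)) := by
  rw [extSeq, if_neg h, ← Finset.sum_attach (Finset.range k)
     (fun i => c (i + 1) * extSeq k c v (m - (i + 1)))]

private lemma prim_monic {k : ℕ} {p : Polynomial (ZMod 2)} (hp : IsPrimitivePoly k p) :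
    p.Monic :=
  zmod2_eq_one (Polynomial.leadingCoeff_ne_zero.mpr hp.2.1.ne_zero)

private lemma prim_coeff_zero {k : ℕ} {p : Polynomial (ZMod 2)} (hp : IsPrimitivePoly k p) :
    p.coeff 0 = 1 := by
  obtain ⟨hdeg, hirr, hord⟩ := hp
  by_contra h1
  have h0 : p.coeff 0 = 0 := zmod2_eq_zero h1
  obtain ⟨c, hc⟩ := Polynomial.X_dvd_iff.mpr h0
  have hc' : IsUnit c := by
    rcases hirr.isUnit_or_isUnit hc with h | h
    · exact absurd h Polynomial.not_isUnit_X
    · exact h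
  obtain ⟨r, hr, hrc⟩ := Polynomial.isUnit_iff.mp hc'
  have hr1 : r = 1 := zmod2_eq_one hr.ne_zero
  have hpX : p = X := by rw [hc, ← hrc, hr1]; simp
  rw [hpX] at hord hdeg hirr
  rw [Polynomial.natDegree_X] at hdeg
  rw [← hdeg] at hord
  norm_num at hord
  have hroot : (AdjoinRoot.root (X : Polynomial (ZMod 2))) = 0 :=
    AdjoinRoot.mk_X.symm.trans AdjoinRoot.mk_self
  rw [hroot] at hord
  haveI : Fact (Irreducible (X : Polynomial (ZMod 2))) := ⟨hirr⟩
  exact zero_ne_one hord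

/-- Lemma 1: Two PR codes with distinct primitive connection polynomials of
degree `k` and length `n ≥ 2k` share no nonzero codeword. -/
theorem stmt4 (k n : ℕ) (hn : 2 * k ≤ n)
    (p₁ p₂ : Polynomial (ZMod 2))
    (hp₁ : IsPrimitivePoly k p₁) (hp₂ : IsPrimitivePoly k p₂) (hne : p₁ ≠ p₂) :
    PRCode k n p₁ ∩ PRCode k n p₂ = {0} := by
  obtain ⟨hdeg1, hirr1, -⟩ := id hp₁
  obtain ⟨hdeg2, hirr2, -⟩ := id hp₂
  have hk : 0 < k := hdeg1 ▸ hirr1.natDegree_pos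
  have hm1 : p₁.Monic := prim_monic hp₁
  have hm2 : p₂.Monic := prim_monic hp₂
  have hc01 : p₁.coeff 0 = 1 := prim_coeff_zero hp₁
  have hc02 : p₂.coeff 0 = 1 := prim_coeff_zero hp₂
  have hcop : IsCoprime p₁ p₂ := by
    rw [hirr1.coprime_iff_not_dvd]
    intro hdvd
    exact hne (Polynomial.eq_of_monic_of_associated hm1 hm2 (hirr1.associated_of_dvd hirr2 hdvd))
  obtain ⟨a, b, hab⟩ := hcop
  ext v
  simp only [Set.mem_inter_iff, Set.mem_singleton_iff]
  constructor
  · rintro ⟨hv1, hv2⟩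
    simp only [PRCode, Set.mem_setOf_eq] at hv1 hv2
    set vv : ℕ → ZMod 2 := fun m => if h : m < n then v ⟨m, h⟩ else 0 with hvv
    set w : ℕ → ZMod 2 := extSeq k p₁.coeff vv with hw
    have hwlt : ∀ m', m' < k → w m' = vv m' := fun _ h => by rw [hw]; exact extSeq_lt h
    have hwrec : ∀ m', ¬ m' < k →
        w m' = ∑ j ∈ Finset.range k, p₁.coeff (j + 1) * w (m' - (j + 1)) := fun m' h => by
      rw [hw]; exact extSeq_ge h
    have hW1 : ∀ m, (hmn : m < n) → w m = v ⟨m, hmn⟩ := by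
      intro m
      induction m using Nat.strong_induction_on with
      | _ m ih =>
        intro hmn
        by_cases hmk : m < k
        · rw [hwlt m hmk, hvv]; simp only []; rw [dif_pos hmn]
        · rw [hwrec m hmk]
          have hrec := hv1 ⟨m, hmn⟩ (le_of_not_gt hmk)
          rw [Finset.sum_range_succ'] at hrec
          simp only [Nat.sub_zero, hc01, one_mul] at hrec
          refine Eq.trans (Finset.sum_congr rfl fun i hi => ?_) (char2_cancel hrec).symm
          have hik : i < k := Finset.mem_range.mp hi
          rw [ih (m - (i + 1)) (by omega) (by omega)]
    have hW2 : ∀ m, k ≤ m → ∑ i ∈ Finset.range (k + 1), p₁.coeff i * w (m - i) = 0 := by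
      intro m hm
      rw [Finset.sum_range_succ']
      simp only [Nat.sub_zero, hc01, one_mul]
      rw [hwrec m (by omega)]
      exact char2_self _
    have hW3 : ∀ m, k ≤ m → ∑ i ∈ Finset.range (k + 1), p₂.coeff i * w (m - i) = 0 := by
      intro m
      induction m using Nat.strong_induction_on with
      | _ m ih =>
        intro hm
        by_cases hmn : m < n
        · have hrec := hv2 ⟨m, hmn⟩ hm
          refine Eq.trans (Finset.sum_congr rfl fun i hi => ?_) hrec
          have hik : i < k + 1 := Finset.mem_range.mp hi
          rw [hW1 (m - i) (by omega)]
        · calc ∑ i ∈ Finset.range (k + 1), p₂.coeff i * w (m - i)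
              = ∑ i ∈ Finset.range (k + 1), ∑ j ∈ Finset.range k,
                  p₁.coeff (j + 1) * (p₂.coeff i * w (m - (j + 1) - i)) := by
                refine Finset.sum_congr rfl fun i hi => ?_
                have hik : i < k + 1 := Finset.mem_range.mp hi
                rw [hwrec (m - i) (by omega), Finset.mul_sum]
                refine Finset.sum_congr rfl fun j hj => ?_
                have hj' : m - i - (j + 1) = m - (j + 1) - i := by omega
                rw [hj']; ring
            _ = ∑ j ∈ Finset.range k, p₁.coeff (j + 1) *
                  ∑ i ∈ Finset.range (k + 1), p₂.coeff i * w (m - (j + 1) - i) := by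
                rw [Finset.sum_comm]
                exact Finset.sum_congr rfl fun j _ => (Finset.mul_sum _ _ _).symm
            _ = 0 := by
                refine Finset.sum_eq_zero fun j hj => ?_
                have hjk : j < k := Finset.mem_range.mp hj
                rw [ih (m - (j + 1)) (by omega) (by omega), mul_zero]
    have hU1 : ∀ m, k ≤ m → (Polynomial.aeval shiftT p₁) w m = 0 := by
      intro m hm
      rw [aeval_shiftT_apply, hdeg1]
      exact hW2 m hm
    have hU2 : ∀ m, k ≤ m → (Polynomial.aeval shiftT p₂) w m = 0 := by
      intro m hm
      rw [aeval_shiftT_apply, hdeg2]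
      exact hW3 m hm
    set M := k + max a.natDegree b.natDegree with hM
    have hBig : ∀ m, M ≤ m → w m = 0 := by
      intro m hm
      have h1 : (Polynomial.aeval shiftT (a * p₁)) w m = 0 := by
        rw [map_mul, Module.End.mul_apply, aeval_shiftT_apply]
        refine Finset.sum_eq_zero fun j hj => ?_
        have hj' : j < a.natDegree + 1 := Finset.mem_range.mp hj
        rw [hU1 (m - j) (by omega), mul_zero]
      have h2 : (Polynomial.aeval shiftT (b * p₂)) w m = 0 := by
        rw [map_mul, Module.End.mul_apply, aeval_shiftT_apply]
        refine Finset.sum_eq_zero fun j hj => ?_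
        have hj' : j < b.natDegree + 1 := Finset.mem_range.mp hj
        rw [hU2 (m - j) (by omega), mul_zero]
      have h3 : (Polynomial.aeval shiftT (a * p₁ + b * p₂)) w m = 0 := by
        rw [map_add, LinearMap.add_apply, Pi.add_apply, h1, h2, add_zero]
      rw [hab, map_one] at h3
      simpa using h3
    have hAll : ∀ d m, M ≤ m + d → w m = 0 := by
      intro d
      induction d using Nat.strong_induction_on with
      | _ d ih =>
        intro m hmd
        by_cases hMm : M ≤ m
        · exact hBig m hMm
        · have hrec := hW2 (m + k) (by omega)
          rw [Finset.sum_range_succ] at hrec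
          have hkk : p₁.coeff k = 1 := by rw [← hdeg1]; exact hm1.coeff_natDegree
          have hz : ∀ i ∈ Finset.range k, p₁.coeff i * w (m + k - i) = 0 := by
            intro i hi
            have hik : i < k := Finset.mem_range.mp hi
            by_cases h2 : M ≤ m + k - i
            · rw [hBig _ h2, mul_zero]
            · rw [ih (d - (k - i)) (by omega) (m + k - i) (by omega), mul_zero]
          rw [Finset.sum_eq_zero hz, hkk, one_mul, zero_add] at hrec
          simpa using hrec
    funext j
    show v j = 0
    calc v j = w j.1 := (hW1 j.1 j.2).symm
      _ = 0 := hAll M j.1 (by omega)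
  · rintro rfl
    constructor <;> simp [PRCode]
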